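/- arXiv:1606.00160 — 2 statements merged into one kernel-verified Lean document; each statement's English description precedes it below -/
import Mathlib

section
/- For all finitely supported functions u, v : ℕ → ℕ, one has u ≻ v in the lexicographic order if and only if R(u) > R(v). In other words, the rank R is a strictly order-preserving map from the lexicographically ordered finitely supported functions ℕ → ℕ into the rationals. -/
/-- The rank of a medal word `w : ℕ →₀ ℕ`. -/
noncomputable def medalRank (w : ℕ →₀ ℕ) : ℚ :=
  ∑ n ∈ w.support,
    (2 : ℚ) ^ (-(((∑ k ∈ Finset.range n, w k) + n : ℕ) : ℤ)) *
      (1 - (2 : ℚ) ^ (-(w n : ℤ)))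

/-- The lexicographic order on medal words: `u ≻ v` iff there is `n` with
`u k = v k` for all `k < n` and `u n > v n`. -/
def MedalLexGT (u v : ℕ →₀ ℕ) : Prop :=
  ∃ n : ℕ, (∀ k < n, u k = v k) ∧ v n < u n

namespace MedalAux

/-- prefix exponent -/
def e (w : ℕ →₀ ℕ) (n : ℕ) : ℕ := (∑ k ∈ Finset.range n, w k) + n

noncomputable def term (w : ℕ →₀ ℕ) (n : ℕ) : ℚ :=
  (2 : ℚ) ^ (-(e w n : ℤ)) * (1 - (2 : ℚ) ^ (-(w n : ℤ)))

lemma e_succ (w : ℕ →₀ ℕ) (n : ℕ) : e w (n+1) = e w n + w n + 1 := by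
  simp [e, Finset.sum_range_succ]; ring

lemma zpow_neg_add (a b : ℕ) :
    (2:ℚ) ^ (-((a + b : ℕ) : ℤ)) = (2:ℚ)^(-(a:ℤ)) * (2:ℚ)^(-(b:ℤ)) := by
  rw [← zpow_add₀ (two_ne_zero)]
  push_cast
  ring_nf

lemma term_eq (w : ℕ →₀ ℕ) (n : ℕ) :
    term w n = (2:ℚ)^(-(e w n : ℤ)) - (2:ℚ)^(-((e w n + w n : ℕ) : ℤ)) := by
  rw [term, mul_sub, mul_one, ← zpow_add₀ (two_ne_zero)]
  push_cast
  ring_nf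

lemma zpow_neg_pos (a : ℕ) : (0:ℚ) < (2:ℚ)^(-(a:ℤ)) := by positivity

lemma zpow_neg_mono {a b : ℕ} (h : a ≤ b) :
    (2:ℚ)^(-(b:ℤ)) ≤ (2:ℚ)^(-(a:ℤ)) := by
  apply zpow_le_zpow_right₀ (by norm_num : (1:ℚ) ≤ 2)
  omega

lemma zpow_neg_succ (a : ℕ) :
    (2:ℚ)^(-((a+1:ℕ):ℤ)) * 2 = (2:ℚ)^(-(a:ℤ)) := by
  rw [zpow_neg_add a 1]
  norm_num
  ring

lemma term_nonneg (w : ℕ →₀ ℕ) (n : ℕ) : 0 ≤ term w n := by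
  rw [term_eq]
  have := zpow_neg_mono (Nat.le_add_right (e w n) (w n))
  linarith

lemma term_zero (w : ℕ →₀ ℕ) {n : ℕ} (h : w n = 0) : term w n = 0 := by
  simp [term, h]

lemma rank_eq_range (w : ℕ →₀ ℕ) {M : ℕ} (h : w.support ⊆ Finset.range M) :
    medalRank w = ∑ n ∈ Finset.range M, term w n := by
  rw [medalRank]
  exact Finset.sum_subset h (fun x _ hx =>
    term_zero w (Finsupp.notMem_support_iff.mp hx))

lemma tail_le (w : ℕ →₀ ℕ) (N : ℕ) : ∀ M, N ≤ M →
    ∑ n ∈ Finset.Ico N M, term w n ≤ (2:ℚ)^(-(e w N:ℤ)) - (2:ℚ)^(-(e w M:ℤ)) := by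
  intro M hM
  induction M, hM using Nat.le_induction with
  | base => simp
  | succ M hM ih =>
    rw [Finset.sum_Ico_succ_top hM, term_eq]
    have h1 : (2:ℚ)^(-((e w M + w M : ℕ):ℤ)) ≥ (2:ℚ)^(-(e w (M+1) : ℤ)) := by
      apply zpow_neg_mono; rw [e_succ]; omega
    linarith

lemma tail_lt (w : ℕ →₀ ℕ) {N M : ℕ} (h : N ≤ M) :
    ∑ n ∈ Finset.Ico N M, term w n < (2:ℚ)^(-(e w N:ℤ)) := by
  have := tail_le w N M h
  have := zpow_neg_pos (e w M)
  linarith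

lemma forward (u v : ℕ →₀ ℕ) (h : MedalLexGT u v) : medalRank v < medalRank u := by
  classical
  obtain ⟨n, hpre, hn⟩ := h
  obtain ⟨M, hnM, hu, hv⟩ : ∃ M, n < M ∧ u.support ⊆ Finset.range M ∧
      v.support ⊆ Finset.range M := by
    refine ⟨n + 1 + (u.support ∪ v.support).sup id, by omega, ?_, ?_⟩ <;>
    · intro x hx
      have : x ≤ (u.support ∪ v.support).sup id :=
        Finset.le_sup (f := id) (by simp [hx])
      simp only [Finset.mem_range]; omega
  -- prefix exponents agree
  have he : ∀ m ≤ n, e u m = e v m := by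
    intro m hm
    unfold e
    congr 1
    exact Finset.sum_congr rfl (fun k hk => hpre k (lt_of_lt_of_le (Finset.mem_range.mp hk) hm))
  -- prefix terms agree
  have hterm : ∀ k < n, term u k = term v k := by
    intro k hk
    rw [term, term, he k hk.le, hpre k hk]
  rw [rank_eq_range u hu, rank_eq_range v hv]
  have hsplit : ∀ w : ℕ →₀ ℕ, ∑ k ∈ Finset.range M, term w k
      = ∑ k ∈ Finset.range n, term w k + ∑ k ∈ Finset.Ico n M, term w k := by
    intro w
    exact (Finset.sum_range_add_sum_Ico _ hnM.le).symm
  rw [hsplit u, hsplit v,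
    Finset.sum_congr rfl (fun k hk => hterm k (Finset.mem_range.mp hk))]
  apply add_lt_add_right
  -- tail comparison
  have hvlt : ∑ k ∈ Finset.Ico n M, term v k
      < (2:ℚ)^(-(e v n : ℤ)) - (2:ℚ)^(-((e v n + v n + 1 : ℕ):ℤ)) := by
    rw [Finset.sum_eq_sum_Ico_succ_bot hnM]
    have h1 := tail_lt v (N := n+1) (M := M) hnM
    rw [term_eq]
    have h2 : (2:ℚ)^(-(e v (n+1) : ℤ)) = (2:ℚ)^(-((e v n + v n + 1 : ℕ):ℤ)) := by
      rw [e_succ]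
    have h3 := zpow_neg_succ (e v n + v n)
    linarith
  have hult : (2:ℚ)^(-(e u n : ℤ)) - (2:ℚ)^(-((e u n + u n : ℕ):ℤ))
      ≤ ∑ k ∈ Finset.Ico n M, term u k := by
    rw [Finset.sum_eq_sum_Ico_succ_bot hnM, ← term_eq]
    have : 0 ≤ ∑ k ∈ Finset.Ico (n+1) M, term u k :=
      Finset.sum_nonneg (fun k _ => term_nonneg u k)
    linarith
  have h4 : (2:ℚ)^(-((e v n + u n : ℕ):ℤ)) ≤ (2:ℚ)^(-((e v n + v n + 1 : ℕ):ℤ)) := by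
    apply zpow_neg_mono
    omega
  rw [he n le_rfl] at hult
  linarith

lemma total (u v : ℕ →₀ ℕ) (h : u ≠ v) : MedalLexGT u v ∨ MedalLexGT v u := by
  classical
  have hex : ∃ n, u n ≠ v n := by
    by_contra h'
    push_neg at h'
    exact h (Finsupp.ext h')
  have hn := Nat.find_spec hex
  have hmin : ∀ k < Nat.find hex, u k = v k :=
    fun k hk => not_not.mp (Nat.find_min hex hk)
  rcases lt_or_gt_of_ne hn with h1 | h1
  · exact Or.inr ⟨Nat.find hex, fun k hk => (hmin k hk).symm, h1⟩
  · exact Or.inl ⟨Nat.find hex, hmin, h1⟩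

end MedalAux

theorem medalRank_strictMono (u v : ℕ →₀ ℕ) :
    MedalLexGT u v ↔ medalRank v < medalRank u := by
  constructor
  · exact MedalAux.forward u v
  · intro h
    by_contra hng
    rcases eq_or_ne u v with rfl | hne
    · exact lt_irrefl _ h
    · rcases MedalAux.total u v hne with h1 | h1
      · exact hng h1
      · exact absurd (MedalAux.forward v u h1) (not_lt.mpr h.le)
end

section
/- Let w : ℕ → ℕ be finitely supported with w m = 0 for all m ≥ n, and let S = Σ_m w m. For every k : ℕ, if w' and w'' denote w modified to take the value k+1, respectively k, at position n, then R(w') − R(w'') = 2^{-(S + n + k + 1)}. In particular this increment is strictly decreasing in k: each additional medal of a given class raises the rank by less than the previous one. -/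
lemma medalRank_update (w : ℕ →₀ ℕ) (n : ℕ)
    (hw : ∀ m, n ≤ m → w m = 0) (v : ℕ) :
    medalRank (w.update n v) = medalRank w +
      (2 : ℚ) ^ (-(((∑ k ∈ Finset.range n, w k) + n : ℕ) : ℤ)) *
        (1 - (2 : ℚ) ^ (-(v : ℤ))) := by
  have hsupp : w.support ⊆ Finset.range n := by
    intro m hm
    simp only [Finsupp.mem_support_iff] at hm
    rw [Finset.mem_range]
    by_contra h
    exact hm (hw m (le_of_not_gt h))
  have hn : n ∉ w.support := by
    simp [Finsupp.mem_support_iff, hw n le_rfl]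
  have hupd : ∀ m, m ≠ n → (w.update n v) m = w m := by
    intro m hm
    simp [Finsupp.coe_update, Function.update_of_ne hm]
  have hsub : (w.update n v).support ⊆ insert n w.support := by
    intro m hm
    simp only [Finsupp.mem_support_iff] at hm
    rcases eq_or_ne m n with h | h
    · simp [h]
    · exact Finset.mem_insert_of_mem (by simpa [Finsupp.mem_support_iff, hupd m h] using hm)
  have hsum : ∀ m, m ≤ n → ∑ k ∈ Finset.range m, (w.update n v) k = ∑ k ∈ Finset.range m, w k := by
    intro m hm
    apply Finset.sum_congr rfl
    intro x hx
    rw [Finset.mem_range] at hx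
    exact hupd x (by omega)
  rw [medalRank, Finset.sum_subset hsub ?_]
  · rw [Finset.sum_insert hn]
    have hvn : (w.update n v) n = v := by simp
    rw [hsum n le_rfl, hvn]
    rw [add_comm]
    congr 1
    rw [medalRank]
    apply Finset.sum_congr rfl
    intro m hm
    have hmn : m ≠ n := fun h => hn (h ▸ hm)
    rw [hupd m hmn, hsum m (le_of_lt (Finset.mem_range.mp (hsupp hm)))]
  · intro m _ hm
    simp only [Finsupp.mem_support_iff, not_not] at hm
    rw [hm]
    simp

theorem medalRank_increment (w : ℕ →₀ ℕ) (n : ℕ)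
    (hw : ∀ m, n ≤ m → w m = 0)
    (S : ℕ) (hS : S = ∑ m ∈ w.support, w m) (k : ℕ) :
    medalRank (w.update n (k + 1)) - medalRank (w.update n k) =
      (2 : ℚ) ^ (-((S + n + k + 1 : ℕ) : ℤ)) := by
  have hsupp : w.support ⊆ Finset.range n := by
    intro m hm
    simp only [Finsupp.mem_support_iff] at hm
    rw [Finset.mem_range]
    by_contra h
    exact hm (hw m (le_of_not_gt h))
  have hS' : (∑ k ∈ Finset.range n, w k) = S := by
    rw [hS]
    exact (Finset.sum_subset hsupp (by
      intro x _ hx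
      simpa [Finsupp.mem_support_iff, not_not] using hx)).symm
  rw [medalRank_update w n hw, medalRank_update w n hw, hS']
  have h2 : (2:ℚ) ≠ 0 := by norm_num
  push_cast
  have e1 : -((S:ℤ)+(n:ℤ)+(k:ℤ)+1) = (-((S:ℤ)+(n:ℤ))) + (-(k:ℤ)) + (-1) := by ring
  have e2 : -((k:ℤ)+1) = (-(k:ℤ)) + (-1) := by ring
  rw [e1, e2, zpow_add₀ h2, zpow_add₀ h2, zpow_add₀ h2,
    show (2:ℚ)^(-1:ℤ) = 1/2 by norm_num]
  ring
end
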